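/- Let r_i ∈ R^3, γ_i > 0, b_i = R^T r_i and b̂_i = R̂^T r_i for rotation matrices R, R̂ ∈ SO(3), and let the unit quaternion Q̃ = (q̃0, q̃) satisfy R(Q̃) = R R̂^T. Then ∑_{i=1}^n γ_i S(b̂_i) b_i = -2 R̂^T (q̃0 I_3 - S(q̃)) W_γ q̃, where W_γ = -∑ γ_i S(r_i)^2. -/

import Mathlib

open Matrix
/-- The skew-symmetric (cross-product) matrix map `S : ℝ³ → so(3)`. -/
def skewS (x : Fin 3 → ℝ) : Matrix (Fin 3) (Fin 3) ℝ :=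
  !![0, -x 2, x 1; x 2, 0, -x 0; -x 1, x 0, 0]

/-- The Rodriguez rotation matrix associated to a quaternion `(q0, q)`. -/
def rod (q0 : ℝ) (q : Fin 3 → ℝ) : Matrix (Fin 3) (Fin 3) ℝ :=
  (q0 ^ 2 - q ⬝ᵥ q) • (1 : Matrix (Fin 3) (Fin 3) ℝ) +
    (2 : ℝ) • Matrix.vecMulVec q q + (2 * q0) • skewS q

lemma crossConj (M : Matrix (Fin 3) (Fin 3) ℝ) (a : Fin 3 → ℝ) :
    Mᵀ * skewS (M.mulVec a) * M = M.det • skewS a := by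
  ext i j
  fin_cases i <;> fin_cases j <;>
    simp [Matrix.mul_apply, skewS, Matrix.mulVec, Matrix.det_fin_three,
      Fin.sum_univ_three, dotProduct, Matrix.transpose] <;> ring

lemma key (q0 : ℝ) (q : Fin 3 → ℝ) (hunit : q0 ^ 2 + q ⬝ᵥ q = 1) (r : Fin 3 → ℝ) :
    (skewS r * (rod q0 q)ᵀ).mulVec r =
      (2:ℝ) • ((q0 • (1 : Matrix (Fin 3) (Fin 3) ℝ) - skewS q) *
        (skewS r * skewS r)).mulVec q := by
  have h : q ⬝ᵥ q = 1 - q0 ^ 2 := by linarith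
  simp only [dotProduct, Fin.sum_univ_three] at h
  ext i
  fin_cases i <;>
    simp [Matrix.mul_apply, skewS, rod, Matrix.mulVec, Fin.sum_univ_three,
      dotProduct, Matrix.vecMulVec, Matrix.one_apply, Matrix.transpose] <;>
    first
      | ring
      | linear_combination (-2 * r 0 * (r 1 * q 1 + r 2 * q 2)) * h
      | linear_combination (2 * r 0 * (r 1 * q 1 + r 2 * q 2)) * h
      | linear_combination (-2 * r 1 * (r 0 * q 0 + r 2 * q 2)) * h
      | linear_combination (2 * r 1 * (r 0 * q 0 + r 2 * q 2)) * h
      | linear_combination (-2 * r 2 * (r 0 * q 0 + r 1 * q 1)) * h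
      | linear_combination (2 * r 2 * (r 0 * q 0 + r 1 * q 1)) * h

lemma mulVec_sum' {ι : Type*} (A : Matrix (Fin 3) (Fin 3) ℝ) (s : Finset ι)
    (f : ι → Fin 3 → ℝ) : A.mulVec (∑ i ∈ s, f i) = ∑ i ∈ s, A.mulVec (f i) := by
  simp only [← Matrix.mulVecLin_apply, map_sum]

lemma sum_mulVec' {ι : Type*} (s : Finset ι) (f : ι → Matrix (Fin 3) (Fin 3) ℝ)
    (v : Fin 3 → ℝ) : (∑ i ∈ s, f i).mulVec v = ∑ i ∈ s, (f i).mulVec v := by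
  ext j
  simp only [Matrix.mulVec, dotProduct, Finset.sum_apply, Matrix.sum_apply, Finset.sum_mul]
  rw [Finset.sum_comm]


theorem stmt11 (n : ℕ) (r : Fin n → Fin 3 → ℝ) (γ : Fin n → ℝ) (hγ : ∀ i, 0 < γ i)
    (R Rh : Matrix (Fin 3) (Fin 3) ℝ)
    (hR : R * Rᵀ = 1) (hRdet : R.det = 1) (hRh : Rh * Rhᵀ = 1) (hRhdet : Rh.det = 1)
    (q0 : ℝ) (q : Fin 3 → ℝ) (hunit : q0 ^ 2 + q ⬝ᵥ q = 1)
    (hrel : rod q0 q = R * Rhᵀ) :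
    (∑ i, γ i • (skewS (Rhᵀ.mulVec (r i))).mulVec (Rᵀ.mulVec (r i))) =
      (-2 : ℝ) • Rhᵀ.mulVec
        ((q0 • (1 : Matrix (Fin 3) (Fin 3) ℝ) - skewS q).mulVec
          ((-(∑ i, γ i • (skewS (r i) * skewS (r i)))).mulVec q)) := by
  have hRh' : Rhᵀ * Rh = 1 := mul_eq_one_comm.mp hRh
  -- skewS conjugation
  have hskew : ∀ a : Fin 3 → ℝ, skewS (Rhᵀ.mulVec a) = Rhᵀ * skewS a * Rh := by
    intro a
    have h := crossConj Rhᵀ a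
    rw [transpose_transpose, det_transpose, hRhdet, one_smul] at h
    calc skewS (Rhᵀ.mulVec a)
        = (Rhᵀ * Rh) * skewS (Rhᵀ.mulVec a) * (Rhᵀ * Rh) := by rw [hRh']; simp
      _ = Rhᵀ * (Rh * skewS (Rhᵀ.mulVec a) * Rhᵀ) * Rh := by
          simp only [Matrix.mul_assoc]
      _ = Rhᵀ * skewS a * Rh := by rw [h]
  have hRt : Rᵀ = Rhᵀ * (rod q0 q)ᵀ := by
    rw [hrel, transpose_mul, transpose_transpose, ← Matrix.mul_assoc, hRh', Matrix.one_mul]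
  -- LHS as a single sum of the canonical form
  have hterm : ∀ i, γ i • (skewS (Rhᵀ.mulVec (r i))).mulVec (Rᵀ.mulVec (r i)) =
      (2 * γ i) • Rhᵀ.mulVec
        (((q0 • (1 : Matrix (Fin 3) (Fin 3) ℝ) - skewS q) *
          (skewS (r i) * skewS (r i))).mulVec q) := by
    intro i
    rw [hskew, hRt, Matrix.mulVec_mulVec]
    have hm : (Rhᵀ * skewS (r i) * Rh) * (Rhᵀ * (rod q0 q)ᵀ)
        = Rhᵀ * (skewS (r i) * (rod q0 q)ᵀ) := by
      calc (Rhᵀ * skewS (r i) * Rh) * (Rhᵀ * (rod q0 q)ᵀ)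
          = Rhᵀ * (skewS (r i) * ((Rh * Rhᵀ) * (rod q0 q)ᵀ)) := by
            simp only [Matrix.mul_assoc]
        _ = _ := by rw [hRh, Matrix.one_mul]
    rw [hm, ← Matrix.mulVec_mulVec, key q0 q hunit (r i)]
    rw [Matrix.mulVec_smul, smul_smul, mul_comm (γ i) 2]
  rw [Finset.sum_congr rfl (fun i _ => hterm i)]
  -- now expand RHS
  rw [Matrix.neg_mulVec, Matrix.mulVec_neg, Matrix.mulVec_neg, smul_neg, neg_smul, neg_neg]
  rw [sum_mulVec', mulVec_sum', mulVec_sum', Finset.smul_sum]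
  refine Finset.sum_congr rfl fun i _ => ?_
  rw [Matrix.smul_mulVec, Matrix.mulVec_smul, Matrix.mulVec_smul,
    smul_smul, Matrix.mulVec_mulVec]
  simp only [Matrix.mulVec_mulVec, Matrix.mul_assoc]
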